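/- Let U ⊆ ℝ² be open with coordinates (t,x), let v, k : U → ℝ be twice continuously differentiable, let λ : U → ℝ be a function, and assume that on U: v(t,x) ≠ 0, ∂ₜv − ∂ₓ²v = −vk² − 2(∂ₓv)²/v + λ∂ₓv, and ∂ₜk − ∂ₓ²k = λ∂ₓk + k³. Then on U one has the inequality ∂ₜ(v²k²) − ∂ₓ²(v²k²) ≤ (λ − 2(∂ₓv)/v)·∂ₓ(v²k²). -/

import Mathlib

/-- Partial derivative with respect to the first coordinate `t` of a function of `(t,x)`. -/
noncomputable def pdt (g : ℝ × ℝ → ℝ) (p : ℝ × ℝ) : ℝ :=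
  deriv (fun t => g (t, p.2)) p.1

/-- Partial derivative with respect to the second coordinate `x` of a function of `(t,x)`. -/
noncomputable def pdx (g : ℝ × ℝ → ℝ) (p : ℝ × ℝ) : ℝ :=
  deriv (fun x => g (p.1, x)) p.2

lemma contDiffAt_deriv_of_two {a : ℝ → ℝ} {x : ℝ} (ha : ContDiffAt ℝ 2 a x) :
    ContDiffAt ℝ 1 (deriv a) x := by
  obtain ⟨u, hu, h⟩ := ha.contDiffOn le_rfl (by simp)
  obtain ⟨t, hts, ht, hxt⟩ := mem_nhds_iff.mp hu
  have : ContDiffOn ℝ 1 (deriv a) t :=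
    (h.mono hts).deriv_of_isOpen ht (by norm_num)
  exact this.contDiffAt (ht.mem_nhds hxt)

lemma deriv_sq_mul_sq {a b : ℝ → ℝ} {x : ℝ} (ha : DifferentiableAt ℝ a x)
    (hb : DifferentiableAt ℝ b x) :
    deriv (fun y => a y ^ 2 * b y ^ 2) x
      = 2 * a x * deriv a x * b x ^ 2 + 2 * (a x) ^ 2 * b x * deriv b x := by
  have h := ((ha.hasDerivAt.pow 2).mul (hb.hasDerivAt.pow 2)).deriv
  show deriv (a ^ 2 * b ^ 2) x = _
  rw [h]; norm_num <;> ring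

lemma deriv2_sq_mul_sq {a b : ℝ → ℝ} {x : ℝ} (ha : ContDiffAt ℝ 2 a x)
    (hb : ContDiffAt ℝ 2 b x) :
    deriv (deriv (fun y => a y ^ 2 * b y ^ 2)) x =
      2 * (deriv a x) ^ 2 * (b x) ^ 2 + 2 * a x * (deriv (deriv a) x) * (b x) ^ 2
      + 8 * a x * (deriv a x) * (b x) * (deriv b x) + 2 * (a x) ^ 2 * (deriv b x) ^ 2
      + 2 * (a x) ^ 2 * (b x) * (deriv (deriv b) x) := by
  have hEv : deriv (fun y => a y ^ 2 * b y ^ 2)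
      =ᶠ[nhds x] fun y => 2 * a y * deriv a y * b y ^ 2 + 2 * (a y) ^ 2 * b y * deriv b y := by
    filter_upwards [ha.eventually (by simp), hb.eventually (by simp)] with y hay hby
    exact deriv_sq_mul_sq (hay.differentiableAt (by norm_num))
      (hby.differentiableAt (by norm_num))
  rw [hEv.deriv_eq]
  have Ha : HasDerivAt a (deriv a x) x :=
    (ha.differentiableAt (by norm_num)).hasDerivAt
  have Hb : HasDerivAt b (deriv b x) x :=
    (hb.differentiableAt (by norm_num)).hasDerivAt
  have Ha' : HasDerivAt (deriv a) (deriv (deriv a) x) x :=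
    ((contDiffAt_deriv_of_two ha).differentiableAt (by norm_num)).hasDerivAt
  have Hb' : HasDerivAt (deriv b) (deriv (deriv b) x) x :=
    ((contDiffAt_deriv_of_two hb).differentiableAt (by norm_num)).hasDerivAt
  have H := (((Ha.const_mul 2).mul Ha').mul (Hb.pow 2)).add
    ((((Ha.pow 2).const_mul 2).mul Hb).mul Hb')
  show deriv ((fun y => 2 * a y) * deriv a * b ^ 2 + (fun y => 2 * (a ^ 2) y) * b * deriv b) x = _
  rw [H.deriv]; norm_num <;> ring

theorem stmt12 (U : Set (ℝ × ℝ)) (hU : IsOpen U) (v k lam : ℝ × ℝ → ℝ)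
    (hv : ContDiffOn ℝ 2 v U) (hk : ContDiffOn ℝ 2 k U)
    (hv0 : ∀ p ∈ U, v p ≠ 0)
    (hveq : ∀ p ∈ U,
      pdt v p - pdx (pdx v) p = -(v p) * (k p) ^ 2 - 2 * (pdx v p) ^ 2 / v p + lam p * pdx v p)
    (hkeq : ∀ p ∈ U, pdt k p - pdx (pdx k) p = lam p * pdx k p + (k p) ^ 3) :
    ∀ p ∈ U,
      pdt (fun q => (v q) ^ 2 * (k q) ^ 2) p - pdx (pdx (fun q => (v q) ^ 2 * (k q) ^ 2)) p
        ≤ (lam p - 2 * pdx v p / v p) * pdx (fun q => (v q) ^ 2 * (k q) ^ 2) p := by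
  intro p hp
  have hvp : ContDiffAt ℝ 2 v p := hv.contDiffAt (hU.mem_nhds hp)
  have hkp : ContDiffAt ℝ 2 k p := hk.contDiffAt (hU.mem_nhds hp)
  -- slice maps
  have hslx : ContDiffAt ℝ 2 (fun x : ℝ => v (p.1, x)) p.2 :=
    hvp.comp p.2 (ContDiffAt.prodMk contDiffAt_const contDiffAt_id)
  have hslxk : ContDiffAt ℝ 2 (fun x : ℝ => k (p.1, x)) p.2 :=
    hkp.comp p.2 (ContDiffAt.prodMk contDiffAt_const contDiffAt_id)
  have hslt : DifferentiableAt ℝ (fun t : ℝ => v (t, p.2)) p.1 :=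
    (hvp.comp p.1 (ContDiffAt.prodMk contDiffAt_id contDiffAt_const)).differentiableAt (by norm_num)
  have hsltk : DifferentiableAt ℝ (fun t : ℝ => k (t, p.2)) p.1 :=
    (hkp.comp p.1 (ContDiffAt.prodMk contDiffAt_id contDiffAt_const)).differentiableAt (by norm_num)
  -- name the quantities
  set V := v p with hV
  set K := k p with hK
  set L := lam p with hL
  have hpdt : pdt (fun q => (v q) ^ 2 * (k q) ^ 2) p
      = 2 * V * pdt v p * K ^ 2 + 2 * V ^ 2 * K * pdt k p := by
    have : pdt (fun q => (v q) ^ 2 * (k q) ^ 2) p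
        = deriv (fun t => (fun s => v (s, p.2)) t ^ 2 * (fun s => k (s, p.2)) t ^ 2) p.1 := rfl
    rw [this, deriv_sq_mul_sq hslt hsltk]
    rfl
  have hpdx : pdx (fun q => (v q) ^ 2 * (k q) ^ 2) p
      = 2 * V * pdx v p * K ^ 2 + 2 * V ^ 2 * K * pdx k p := by
    have : pdx (fun q => (v q) ^ 2 * (k q) ^ 2) p
        = deriv (fun x => (fun y => v (p.1, y)) x ^ 2 * (fun y => k (p.1, y)) x ^ 2) p.2 := rfl
    rw [this, deriv_sq_mul_sq (hslx.differentiableAt (by norm_num))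
      (hslxk.differentiableAt (by norm_num))]
    rfl
  have hpdxx : pdx (pdx (fun q => (v q) ^ 2 * (k q) ^ 2)) p
      = 2 * (pdx v p) ^ 2 * K ^ 2 + 2 * V * pdx (pdx v) p * K ^ 2
        + 8 * V * pdx v p * K * pdx k p + 2 * V ^ 2 * (pdx k p) ^ 2
        + 2 * V ^ 2 * K * pdx (pdx k) p := by
    have : pdx (pdx (fun q => (v q) ^ 2 * (k q) ^ 2)) p
        = deriv (deriv (fun x => (fun y => v (p.1, y)) x ^ 2 * (fun y => k (p.1, y)) x ^ 2)) p.2 := rfl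
    rw [this, deriv2_sq_mul_sq hslx hslxk]
    rfl
  have hVne : V ≠ 0 := hv0 p hp
  have h1 := hveq p hp
  have h2 := hkeq p hp
  rw [hpdt, hpdx, hpdxx]
  set vt := pdt v p
  set vx := pdx v p
  set vxx := pdx (pdx v) p
  set kt := pdt k p
  set kx := pdx k p
  set kxx := pdx (pdx k) p
  have hvteq : vt = -V * K ^ 2 - 2 * vx ^ 2 / V + L * vx + vxx := by linarith
  have hkteq : kt = L * kx + K ^ 3 + kxx := by linarith
  have key : (L - 2 * vx / V) * (2 * V * vx * K ^ 2 + 2 * V ^ 2 * K * kx)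
      - ((2 * V * vt * K ^ 2 + 2 * V ^ 2 * K * kt)
        - (2 * vx ^ 2 * K ^ 2 + 2 * V * vxx * K ^ 2 + 8 * V * vx * K * kx
          + 2 * V ^ 2 * kx ^ 2 + 2 * V ^ 2 * K * kxx))
      = 2 * (vx * K + V * kx) ^ 2 := by
    rw [hvteq, hkteq]
    field_simp
    ring
  nlinarith [sq_nonneg (vx * K + V * kx)]
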